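/- arXiv:1507.05044 — 2 statements merged into one kernel-verified Lean document; each statement's English description precedes it below -/
import Mathlib

section
/- If X is a totally bounded metric space and f : X → X satisfies d(f(x), f(y)) ≥ d(x, y) for all x, y ∈ X, then f is an isometry. -/
/-- Expansiveness iterates. -/
lemma iter_expand {Y : Type*} [MetricSpace Y] (g : Y → Y)
    (hg : ∀ x y : Y, dist x y ≤ dist (g x) (g y)) :
    ∀ (k : ℕ) (x y : Y), dist x y ≤ dist (g^[k] x) (g^[k] y) := by
  intro k
  induction k with
  | zero => simp
  | succ n ih =>
    intro x y
    calc dist x y ≤ dist (g x) (g y) := hg x y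
    _ ≤ dist (g^[n] (g x)) (g^[n] (g y)) := ih _ _
    _ = dist (g^[n+1] x) (g^[n+1] y) := by
        rw [Function.iterate_succ_apply, Function.iterate_succ_apply]

/-- Every point is recurrent under an expansive map of a totally bounded space. -/
lemma recurrent {Y : Type*} [MetricSpace Y]
    (hY : TotallyBounded (Set.univ : Set Y)) (g : Y → Y)
    (hg : ∀ x y : Y, dist x y ≤ dist (g x) (g y))
    (p : Y) {δ : ℝ} (hδ : 0 < δ) : ∃ k ≥ 1, dist p (g^[k] p) < δ := by
  obtain ⟨t, ht, hcov⟩ := (Metric.totallyBounded_iff.mp hY) (δ/2) (by linarith)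
  have hmem : ∀ n : ℕ, ∃ c ∈ t, g^[n] p ∈ Metric.ball c (δ/2) := by
    intro n
    have := hcov (Set.mem_univ (g^[n] p))
    simpa using this
  choose c hct hc using hmem
  haveI := ht.to_subtype
  obtain ⟨m, n, hmn, heq⟩ :=
    Finite.exists_ne_map_eq_of_infinite (fun i : ℕ => (⟨c i, hct i⟩ : t))
  wlog hlt : m < n generalizing m n
  · exact this n m hmn.symm heq.symm (by omega)
  have hceq : c m = c n := congrArg Subtype.val heq
  have hd : dist (g^[m] p) (g^[n] p) < δ := by
    have h1 := hc m
    have h2 := hc n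
    rw [Metric.mem_ball] at h1 h2
    calc dist (g^[m] p) (g^[n] p) ≤ dist (g^[m] p) (c m) + dist (c m) (g^[n] p) :=
          dist_triangle _ _ _
    _ < δ/2 + δ/2 := by
        exact add_lt_add h1 (by rw [hceq, dist_comm]; exact h2)
    _ = δ := by ring
  refine ⟨n - m, by omega, ?_⟩
  have : dist p (g^[n-m] p) ≤ dist (g^[m] p) (g^[m] (g^[n-m] p)) := iter_expand g hg m _ _
  rw [← Function.iterate_add_apply, Nat.add_sub_cancel' (le_of_lt hlt)] at this
  exact lt_of_le_of_lt this hd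

theorem expansive_isometry_totallyBounded {X : Type*} [MetricSpace X]
    (hX : TotallyBounded (Set.univ : Set X))
    (f : X → X) (hf : ∀ x y : X, dist x y ≤ dist (f x) (f y)) :
    ∀ x y : X, dist (f x) (f y) = dist x y := by
  intro x y
  refine le_antisymm ?_ (hf x y)
  refine le_of_forall_pos_le_add ?_
  intro ε hε
  set g : X × X → X × X := Prod.map f f with hgdef
  have hg : ∀ p q : X × X, dist p q ≤ dist (g p) (g q) := by
    intro p q
    rw [Prod.dist_eq, Prod.dist_eq]
    exact max_le_max (hf _ _) (hf _ _)
  have hY : TotallyBounded (Set.univ : Set (X × X)) := by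
    rw [Metric.totallyBounded_iff]
    intro ε hε
    obtain ⟨t, ht, hcov⟩ := Metric.totallyBounded_iff.mp hX ε hε
    refine ⟨t ×ˢ t, ht.prod ht, ?_⟩
    rintro ⟨a, b⟩ -
    have ha := hcov (Set.mem_univ a)
    have hb := hcov (Set.mem_univ b)
    simp only [Set.mem_iUnion] at ha hb ⊢
    obtain ⟨c1, hc1, hac⟩ := ha
    obtain ⟨c2, hc2, hbc⟩ := hb
    refine ⟨(c1, c2), Set.mk_mem_prod hc1 hc2, ?_⟩
    rw [Metric.mem_ball] at hac hbc ⊢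
    rw [Prod.dist_eq]
    exact max_lt hac hbc
  obtain ⟨k, hk1, hk⟩ := recurrent hY g hg (x, y) (half_pos hε)
  have hiter : g^[k] (x, y) = (f^[k] x, f^[k] y) := by
    induction k with
    | zero => simp
    | succ n ih => simp [Function.iterate_succ_apply', ih, hgdef]
  rw [hiter, Prod.dist_eq] at hk
  have hx : dist x (f^[k] x) < ε/2 := lt_of_le_of_lt (le_max_left _ _) hk
  have hy : dist y (f^[k] y) < ε/2 := lt_of_le_of_lt (le_max_right _ _) hk
  have h1 : dist (f x) (f y) ≤ dist (f^[k] x) (f^[k] y) := by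
    have := iter_expand f hf (k - 1) (f x) (f y)
    rwa [← Function.iterate_succ_apply, ← Function.iterate_succ_apply,
      Nat.succ_eq_add_one, Nat.sub_add_cancel hk1] at this
  calc dist (f x) (f y) ≤ dist (f^[k] x) (f^[k] y) := h1
  _ ≤ dist (f^[k] x) x + dist x y + dist y (f^[k] y) := dist_triangle4 _ _ _ _
  _ ≤ ε/2 + dist x y + ε/2 := by
      rw [dist_comm (f^[k] x) x]
      linarith [hx.le, hy.le]
  _ = dist x y + ε := by ring
end

section
/- Let X be a totally bounded metric space and f : Y → X an expansive map from a dense subset Y of X. Then f extends uniquely to an isometry of X into the completion of X. -/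
open UniformSpace Set

/-- Iterating an approximate version of `f` decreases distances by at most `2δ` per step,
read backwards. -/
lemma aux_iter_dist {X : Type*} [MetricSpace X] {Y : Set X} {f : Y → X}
    (hf : ∀ x y : Y, dist (x : X) (y : X) ≤ dist (f x) (f y))
    {g : Y → Y} {δ : ℝ} (hg : ∀ p : Y, dist (↑(g p) : X) (f p) < δ) :
    ∀ (j : ℕ) (p q : Y), dist (p : X) (q : X) ≤ dist (↑(g^[j] p) : X) (↑(g^[j] q) : X) + 2 * j * δ := by
  intro j
  induction j with
  | zero => intro p q; simp
  | succ j ih =>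
    intro p q
    have h1 : dist (p : X) (q : X) ≤ dist (↑(g p) : X) (↑(g q) : X) + 2 * δ := by
      have := hf p q
      have h2 := hg p
      have h3 := hg q
      have := dist_triangle (↑(g p) : X) (f p) (f q)
      have := dist_triangle (f p) (f q) (↑(g q) : X)
      have : dist (f p) (f q) ≤ dist (↑(g p) : X) (↑(g q) : X) + dist (↑(g p) : X) (f p)
          + dist (f q) (↑(g q) : X) := by
        calc dist (f p) (f q) ≤ dist (f p) (↑(g p) : X) + dist (↑(g p) : X) (f q) :=
              dist_triangle _ _ _
          _ ≤ dist (f p) (↑(g p) : X) + (dist (↑(g p) : X) (↑(g q) : X)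
              + dist (↑(g q) : X) (f q)) := by
              gcongr; exact dist_triangle _ _ _
          _ = dist (↑(g p) : X) (↑(g q) : X) + dist (↑(g p) : X) (f p)
              + dist (f q) (↑(g q) : X) := by rw [dist_comm (f p), dist_comm (↑(g q) : X)]; ring
      have h4 := hf p q
      have h3' : dist (f q) (↑(g q) : X) < δ := by rw [dist_comm]; exact h3
      linarith
    calc dist (p : X) (q : X) ≤ dist (↑(g p) : X) (↑(g q) : X) + 2 * δ := h1
      _ ≤ (dist (↑(g^[j] (g p)) : X) (↑(g^[j] (g q)) : X) + 2 * j * δ) + 2 * δ := by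
          gcongr; exact ih (g p) (g q)
      _ = dist (↑(g^[j+1] p) : X) (↑(g^[j+1] q) : X) + 2 * (j+1 : ℕ) * δ := by
          rw [Function.iterate_succ_apply, Function.iterate_succ_apply]
          push_cast; ring

/-- The key lemma: an expansive map from a dense subset of a totally bounded metric space
is an isometry. -/
lemma key_isometry {X : Type*} [MetricSpace X]
    (hX : TotallyBounded (Set.univ : Set X))
    (Y : Set X) (hY : Dense Y)
    (f : Y → X) (hf : ∀ x y : Y, dist (x : X) (y : X) ≤ dist (f x) (f y)) :
    ∀ x y : Y, dist (f x) (f y) = dist (x : X) (y : X) := by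
  intro x y
  refine le_antisymm ?_ (hf x y)
  -- it suffices to prove `≤ dist x y + ε` for all positive ε
  refine le_of_forall_pos_le_add fun ε hε => ?_
  -- finite ε/8-net
  obtain ⟨t, htfin, htcov⟩ := Metric.totallyBounded_iff.1 hX (ε/8) (by linarith)
  haveI : Fintype t := htfin.fintype
  set M : ℕ := Fintype.card t * Fintype.card t with hM
  -- choose δ
  set δ : ℝ := ε / (12 * (M + 1)) with hδdef
  have hMpos : (0:ℝ) < 12 * ((M:ℝ) + 1) := by positivity
  have hδ : 0 < δ := by positivity
  -- approximate iteration map g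
  have hex : ∀ p : Y, ∃ q : Y, dist (↑q : X) (f p) < δ := by
    intro p
    obtain ⟨q, hqY, hq⟩ := hY.exists_dist_lt (f p) hδ
    exact ⟨⟨q, hqY⟩, by rwa [dist_comm]⟩
  choose g hg using hex
  -- classify points into balls
  have hc : ∀ z : X, ∃ c : t, z ∈ Metric.ball (c : X) (ε/8) := by
    intro z
    have := htcov (mem_univ z)
    simp only [mem_iUnion, exists_prop] at this
    obtain ⟨c, hct, hc⟩ := this
    exact ⟨⟨c, hct⟩, hc⟩
  choose c hcball using hc
  -- pigeonhole on pairs of ball indices along orbits of x and y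
  have hcard : Fintype.card (t × t) < Fintype.card (Fin (M + 1)) := by
    simp [Fintype.card_prod, hM]
  obtain ⟨a, b, hab, heq⟩ := Fintype.exists_ne_map_eq_of_card_lt
    (fun n : Fin (M + 1) => (c (↑(g^[(n:ℕ)] x) : X), c (↑(g^[(n:ℕ)] y) : X))) hcard
  -- wlog a < b
  wlog hlt : (a:ℕ) < (b:ℕ) generalizing a b
  · exact this b a hab.symm heq.symm
      (lt_of_le_of_ne (not_lt.1 hlt) (fun h => hab (Fin.ext h.symm)))
  set m : ℕ := (a:ℕ)
  set n : ℕ := (b:ℕ)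
  set k : ℕ := n - m with hk
  have hk1 : 1 ≤ k := Nat.le_sub_of_add_le (by omega)
  have hmk : m + k = n := by omega
  have hmM : m ≤ M := by omega
  have hkM : k ≤ M := by omega
  -- same ball ⇒ close
  have hclose : ∀ z w : X, c z = c w → dist z w < ε/4 := by
    intro z w h
    have h1 := hcball z
    have h2 := hcball w
    rw [h] at h1
    rw [Metric.mem_ball] at h1 h2
    calc dist z w ≤ dist z (c w : X) + dist (c w : X) w := dist_triangle _ _ _
      _ = dist z (c w : X) + dist w (c w : X) := by rw [dist_comm (c w : X) w]
      _ < ε/8 + ε/8 := by gcongr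
      _ = ε/4 := by ring
  have hxc : dist (↑(g^[m] x) : X) (↑(g^[n] x) : X) < ε/4 :=
    hclose _ _ (congrArg Prod.fst heq)
  have hyc : dist (↑(g^[m] y) : X) (↑(g^[n] y) : X) < ε/4 :=
    hclose _ _ (congrArg Prod.snd heq)
  -- backward estimates
  have hxk : dist (x : X) (↑(g^[k] x) : X) < ε/4 + 2 * m * δ := by
    have hkm : k + m = n := by omega
    have := aux_iter_dist hf hg m x (g^[k] x)
    rw [← Function.iterate_add_apply, hmk] at this
    linarith
  have hyk : dist (y : X) (↑(g^[k] y) : X) < ε/4 + 2 * m * δ := by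
    have hkm : k + m = n := by omega
    have := aux_iter_dist hf hg m y (g^[k] y)
    rw [← Function.iterate_add_apply, hmk] at this
    linarith
  -- first step: dist (f x) (f y) ≤ dist (g x) (g y) + 2δ
  have hstep : dist (f x) (f y) ≤ dist (↑(g x) : X) (↑(g y) : X) + 2 * δ := by
    have h1 := hg x
    have h2 := hg y
    calc dist (f x) (f y) ≤ dist (f x) (↑(g x) : X) + dist (↑(g x) : X) (f y) :=
          dist_triangle _ _ _
      _ ≤ dist (f x) (↑(g x) : X) + (dist (↑(g x) : X) (↑(g y) : X)
          + dist (↑(g y) : X) (f y)) := by gcongr; exact dist_triangle _ _ _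
      _ ≤ dist (↑(g x) : X) (↑(g y) : X) + 2 * δ := by
          have h1' : dist (f x) (↑(g x) : X) < δ := by rw [dist_comm]; exact h1
          have h2' : dist (↑(g y) : X) (f y) < δ := h2
          rw [dist_comm (↑(g y) : X) (f y)] at h2'
          linarith
  -- from step 1 to step k
  obtain ⟨k', hk'⟩ : ∃ k', k = k' + 1 := ⟨k - 1, by omega⟩
  have hiter : dist (↑(g x) : X) (↑(g y) : X) ≤
      dist (↑(g^[k] x) : X) (↑(g^[k] y) : X) + 2 * k' * δ := by
    have := aux_iter_dist hf hg k' (g x) (g y)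
    rw [← Function.iterate_succ_apply, ← Function.iterate_succ_apply,
      Nat.succ_eq_add_one, ← hk'] at this
    exact this
  -- combine
  have htri : dist (↑(g^[k] x) : X) (↑(g^[k] y) : X) ≤
      dist (↑(g^[k] x) : X) (x : X) + dist (x : X) (y : X) + dist (y : X) (↑(g^[k] y) : X) := by
    calc dist (↑(g^[k] x) : X) (↑(g^[k] y) : X)
        ≤ dist (↑(g^[k] x) : X) (y : X) + dist (y : X) (↑(g^[k] y) : X) := dist_triangle _ _ _
      _ ≤ (dist (↑(g^[k] x) : X) (x : X) + dist (x : X) (y : X))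
          + dist (y : X) (↑(g^[k] y) : X) := by gcongr; exact dist_triangle _ _ _
  rw [dist_comm (↑(g^[k] x) : X) (x : X)] at htri
  have hk'M : (k' : ℝ) ≤ M := by exact_mod_cast (by omega : k' ≤ M)
  have hmM' : (m : ℝ) ≤ M := by exact_mod_cast hmM
  have hδbound : 2 * δ + 2 * (k':ℝ) * δ + 4 * (m:ℝ) * δ ≤ ε / 2 := by
    have : 2 * δ + 2 * (k':ℝ) * δ + 4 * (m:ℝ) * δ ≤ (2 + 6 * (M:ℝ)) * δ := by nlinarith
    have h2 : (2 + 6 * (M:ℝ)) * δ ≤ ε / 2 := by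
      have hM0 : (0:ℝ) ≤ (M:ℝ) := Nat.cast_nonneg M
      rw [hδdef, ← mul_div_assoc, div_le_div_iff₀ hMpos (by norm_num : (0:ℝ) < 2)]
      nlinarith [hε.le]
    linarith
  calc dist (f x) (f y) ≤ dist (↑(g x) : X) (↑(g y) : X) + 2 * δ := hstep
    _ ≤ (dist (↑(g^[k] x) : X) (↑(g^[k] y) : X) + 2 * k' * δ) + 2 * δ := by linarith
    _ ≤ (dist (x : X) (↑(g^[k] x) : X) + dist (x : X) (y : X)
        + dist (y : X) (↑(g^[k] y) : X)) + 2 * k' * δ + 2 * δ := by linarith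
    _ ≤ ((ε/4 + 2 * m * δ) + dist (x : X) (y : X) + (ε/4 + 2 * m * δ))
        + 2 * k' * δ + 2 * δ := by linarith
    _ ≤ dist (x : X) (y : X) + ε := by linarith

theorem expansive_extends_to_isometry {X : Type*} [MetricSpace X]
    (hX : TotallyBounded (Set.univ : Set X))
    (Y : Set X) (hY : Dense Y)
    (f : Y → X) (hf : ∀ x y : Y, dist (x : X) (y : X) ≤ dist (f x) (f y)) :
    ∃! F : X → UniformSpace.Completion X,
      Isometry F ∧ ∀ y : Y, F (y : X) = (f y : UniformSpace.Completion X) := by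
  have key := key_isometry hX Y hY f hf
  -- g : Y → Completion X is an isometry
  set g : Y → Completion X := fun y => ((f y : X) : Completion X) with hgdef
  have hgiso : Isometry g := by
    refine Isometry.of_dist_eq fun a b => ?_
    have h1 : dist (g a) (g b) = dist (f a) (f b) := Completion.dist_eq _ _
    rw [h1, key a b, Subtype.dist_eq]
  have h_e : IsUniformInducing (Subtype.val : Y → X) :=
    isUniformEmbedding_subtype_val.isUniformInducing
  have h_dense : DenseRange (Subtype.val : Y → X) := hY.denseRange_val
  have hguc : UniformContinuous g := hgiso.uniformContinuous
  set F : X → Completion X := IsDenseInducing.extend (h_e.isDenseInducing h_dense) g with hFdef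
  have hFuc : UniformContinuous F :=
    uniformContinuous_uniformly_extend h_e h_dense hguc
  have hFy : ∀ y : Y, F (y : X) = g y := fun y =>
    uniformly_extend_of_ind h_e h_dense hguc y
  have hFiso : Isometry F := by
    refine Isometry.of_dist_eq fun a b => ?_
    have hdense2 : Dense ((Y ×ˢ Y : Set (X × X))) := hY.prod hY
    have hcont1 : Continuous (fun p : X × X => dist (F p.1) (F p.2)) := by
      exact (hFuc.continuous.comp continuous_fst).dist (hFuc.continuous.comp continuous_snd)
    have hcont2 : Continuous (fun p : X × X => dist p.1 p.2) := continuous_dist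
    have heqon : Set.EqOn (fun p : X × X => dist (F p.1) (F p.2))
        (fun p : X × X => dist p.1 p.2) (Y ×ˢ Y) := by
      rintro ⟨u, v⟩ ⟨hu, hv⟩
      simp only
      rw [hFy ⟨u, hu⟩, hFy ⟨v, hv⟩, hgdef]
      simp only
      rw [Completion.dist_eq, key ⟨u, hu⟩ ⟨v, hv⟩]
    have := Continuous.ext_on hdense2 hcont1 hcont2 heqon
    exact congrFun this (a, b)
  refine ⟨F, ⟨hFiso, fun y => hFy y⟩, ?_⟩
  rintro G ⟨hGiso, hGy⟩
  refine Continuous.ext_on hY hGiso.continuous hFuc.continuous fun a ha => ?_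
  rw [hGy ⟨a, ha⟩, hFy ⟨a, ha⟩]
end
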